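/- Assume the θ-setup and additionally that N is even. Then 4 divides T in each of the following cases: (a) B² ≡ D + 4N (mod 8N); (b) B² ≡ D (mod 8N) and D ≡ 1 (mod 8). -/

import Mathlib

/-- The odd part of an integer: for `n ≠ 0`, `n = 2 ^ (padicValInt 2 n) * oddPart n`. -/
def oddPart (n : ℤ) : ℤ := n / 2 ^ (padicValInt 2 n)

/-- PROP20: in the θ-setup with `N` even, `4 ∣ T` in each of the following cases:
(a) `B² ≡ D + 4N (mod 8N)`; (b) `B² ≡ D (mod 8N)` and `D ≡ 1 (mod 8)`. -/
theorem prop20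
    (N A B C u v p D Θ T : ℤ)
    (hN : 2 ≤ N) (hA : Int.gcd A N = 1) (hv : v ≠ 0)
    (hp : Prime p) (hp6 : ¬ p ∣ 6 * N)
    (hNC : N ∣ C) (hpC : p ∣ C) (hpu : p ∣ u)
    (hpeq : p = u * (u - v * B) + v ^ 2 * A * C)
    (hD : D = B ^ 2 - 4 * A * C)
    (hΘ : Θ = (N - 1) * v * ((u - v * B) * (C / (N * p)) +
      A * ((u / p) * (1 - (u - v * B) ^ 2) - (u - v * B))))
    (hT : T = 2 * Θ + 6 * oddPart v * oddPart A * (oddPart N - 1) * ((u - v * B) - 1) +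
      3 * (padicValInt 2 N : ℤ) * ((u - v * B) ^ 2 - 1))
    (hNeven : Even N) :
    (B ^ 2 ≡ D + 4 * N [ZMOD 8 * N] → 4 ∣ T) ∧
    ((B ^ 2 ≡ D [ZMOD 8 * N] ∧ D ≡ 1 [ZMOD 8]) → 4 ∣ T) := by
  subst hD
  have hN0 : N ≠ 0 := by omega
  have hAodd : Odd A := by
    rcases Int.even_or_odd A with hE | hO
    · exfalso
      have hco : IsCoprime A N := Int.isCoprime_iff_gcd_eq_one.mpr hA
      have h2 := hco.isUnit_of_dvd' hE.two_dvd hNeven.two_dvd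
      rw [Int.isUnit_iff] at h2
      omega
    · exact hO
  have hpodd : Odd p := by
    by_contra hcon
    rw [Int.not_odd_iff_even] at hcon
    obtain ⟨t, ht⟩ := hcon
    have h2 : p = 2 * t := by omega
    rcases hp.irreducible.isUnit_or_isUnit h2 with h2u | htu
    · rw [Int.isUnit_iff] at h2u; omega
    · rw [Int.isUnit_iff] at htu
      apply hp6
      rcases htu with h1 | h1
      · refine ⟨3 * N, ?_⟩
        have hp2 : p = 2 := by omega
        rw [hp2]; ring
      · refine ⟨-(3 * N), ?_⟩
        have hp2 : p = -2 := by omega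
        rw [hp2]; ring
  have hpN : ¬ p ∣ N := fun h => hp6 (Dvd.dvd.mul_left h 6)
  have hq : Nat.Prime p.natAbs := Int.prime_iff_natAbs_prime.mp hp
  have hpN' : ¬ p.natAbs ∣ N.natAbs := by rw [Int.natAbs_dvd_natAbs]; exact hpN
  have hcop : IsCoprime N p :=
    (Int.isCoprime_iff_nat_coprime.mpr ((hq.coprime_iff_not_dvd).mpr hpN').symm)
  obtain ⟨k, hk⟩ := hcop.mul_dvd hNC hpC
  have hNp0 : N * p ≠ 0 := mul_ne_zero hN0 hp.ne_zero
  subst hk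
  have hkdiv : N * p * k / (N * p) = k := Int.mul_ediv_cancel_left k hNp0
  obtain ⟨m, hm⟩ := hpu
  have hmdiv : u / p = m := by rw [hm]; exact Int.mul_ediv_cancel_left m hp.ne_zero
  rw [hkdiv, hmdiv] at hΘ
  have hCeven : Even (N * p * k) := (hNeven.mul_right p).mul_right k
  have huu' : Odd (u * (u - v * B)) := by
    have h1 : u * (u - v * B) = p - v ^ 2 * A * (N * p * k) := by linarith [hpeq]
    rw [h1]
    exact hpodd.sub_even (hCeven.mul_left (v ^ 2 * A))
  rw [Int.odd_mul] at huu'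
  obtain ⟨huodd, hu'odd⟩ := huu'
  have key : Even Θ → 4 ∣ T := by
    intro hΘe
    obtain ⟨s, hs⟩ := hΘe
    obtain ⟨w, hwodd⟩ := hu'odd
    refine ⟨s + 3 * (oddPart v * oddPart A * (oddPart N - 1)) * w +
      3 * (padicValInt 2 N : ℤ) * (w ^ 2 + w), ?_⟩
    rw [hT, hs, hwodd]; ring
  constructor
  · intro hcong
    apply key
    obtain ⟨t, ht⟩ := Int.ModEq.dvd hcong
    have h0 : N * (4 - 4 * (A * (p * k)) - 8 * t) = 0 := by linear_combination ht
    have h1 : 4 - 4 * (A * (p * k)) - 8 * t = 0 := by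
      rcases mul_eq_zero.mp h0 with h | h
      · exact absurd h hN0
      · exact h
    have hApk : Odd (A * (p * k)) := ⟨-t, by linarith⟩
    rw [Int.odd_mul, Int.odd_mul] at hApk
    have hkodd : Odd k := hApk.2.2
    have hinner : Even ((u - v * B) * k +
        A * (m * (1 - (u - v * B) ^ 2) - (u - v * B))) := by
      have hodd1 : Odd ((u - v * B) * k) := hu'odd.mul hkodd
      have heven2 : Even (m * (1 - (u - v * B) ^ 2)) :=
        (odd_one.sub_odd (hu'odd.pow)).mul_left m
      have hodd2 : Odd (A * (m * (1 - (u - v * B) ^ 2) - (u - v * B))) :=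
        hAodd.mul (heven2.sub_odd hu'odd)
      exact hodd1.add_odd hodd2
    rw [hΘ]
    exact hinner.mul_left ((N - 1) * v)
  · rintro ⟨-, hD1⟩
    apply key
    obtain ⟨r, hr⟩ := Int.ModEq.dvd hD1
    have hB2 : Odd (B ^ 2) := ⟨2 * (A * (N * p * k)) - 4 * r, by linarith [hr]⟩
    have hBodd : Odd B := by
      rcases Int.even_or_odd B with hE | hO
      · exfalso
        have hE2 : Even (B ^ 2) := Int.even_pow.mpr ⟨hE, by norm_num⟩
        exact ((fun hh => (Int.not_odd_iff_even.mpr hh))  hE2) hB2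
      · exact hO
    have hvB : Even (v * B) := by
      have h := huodd.sub_odd hu'odd
      have h2 : u - (u - v * B) = v * B := by ring
      rwa [h2] at h
    rw [Int.even_mul] at hvB
    have hveven : Even v :=
      hvB.resolve_right (fun h => ((fun hh => (Int.not_odd_iff_even.mpr hh))  h) hBodd)
    rw [hΘ]
    exact (hveven.mul_left (N - 1)).mul_right _
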